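/- For a symmetric positive definite matrix M ∈ ℝ^{n×n} and any V ∈ ℝ^{n×k}, the supremum of ⟨MV, H⟩ over all H ∈ ℝ^{n×k} with HᵀH ⪯ I_k equals Tr(√(Vᵀ M² V)). -/

import Mathlib

open Matrix

/-- The square root of a positive semidefinite matrix, as Mathlib (Dec 2024) defined
`Matrix.PosSemidef.sqrt` (since removed). -/
noncomputable def Matrix.PosSemidef.sqrt {n 𝕜 : Type*} [Fintype n] [DecidableEq n] [RCLike 𝕜]
    [PartialOrder 𝕜] [StarOrderedRing 𝕜]
    {A : Matrix n n 𝕜} (hA : A.PosSemidef) : Matrix n n 𝕜 :=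
  hA.1.eigenvectorUnitary.1 * diagonal ((↑) ∘ (Real.sqrt ·) ∘ hA.1.eigenvalues) *
    (star hA.1.eigenvectorUnitary : Matrix n n 𝕜)

lemma diag_nonneg'' {m : Type*} [Fintype m] [DecidableEq m]
    {B : Matrix m m ℝ} (hB : B.PosSemidef) (i : m) : 0 ≤ B i i := by
  exact hB.diag_nonneg


/-- For symmetric positive definite `M` and any `V`, the supremum of `⟨MV, H⟩`
over `HᵀH ⪯ I` equals `Tr √(Vᵀ M² V)`. -/
theorem stmt1 (n k : ℕ) (M : Matrix (Fin n) (Fin n) ℝ) (hM : M.IsSymm) (hMpd : M.PosDef)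
    (V : Matrix (Fin n) (Fin k) ℝ) (hpsd : (Vᵀ * (M * M) * V).PosSemidef) :
    sSup {x : ℝ | ∃ H : Matrix (Fin n) (Fin k) ℝ,
        ((1 : Matrix (Fin k) (Fin k) ℝ) - Hᵀ * H).PosSemidef ∧
        x = ((M * V)ᵀ * H).trace} = hpsd.sqrt.trace := by
  set U : Matrix (Fin k) (Fin k) ℝ := ↑(hpsd.1.eigenvectorUnitary) with hUdef
  set e : Fin k → ℝ := hpsd.1.eigenvalues with hedef
  have hsUT : star U = Uᵀ := by
    rw [Matrix.star_eq_conjTranspose, Matrix.conjTranspose_eq_transpose_of_trivial]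
  have hU1 : Uᵀ * U = 1 := by
    rw [← hsUT]; exact Matrix.mem_unitaryGroup_iff'.mp (hpsd.1.eigenvectorUnitary).2
  have hU2 : U * Uᵀ = 1 := by
    rw [← hsUT]; exact Matrix.mem_unitaryGroup_iff.mp (hpsd.1.eigenvectorUnitary).2
  have hU1' : ∀ {m : ℕ} (X : Matrix (Fin k) (Fin m) ℝ), Uᵀ * (U * X) = X := by
    intro m X; rw [← Matrix.mul_assoc, hU1, Matrix.one_mul]
  have hU2' : ∀ {m : ℕ} (X : Matrix (Fin k) (Fin m) ℝ), U * (Uᵀ * X) = X := by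
    intro m X; rw [← Matrix.mul_assoc, hU2, Matrix.one_mul]
  have hspec : Vᵀ * (M * M) * V = U * diagonal e * Uᵀ := by
    have h := hpsd.1.spectral_theorem
    rwa [Unitary.conjStarAlgAut_apply, hsUT, RCLike.ofReal_real_eq_id, Function.id_comp] at h
  have hAA : (M * V)ᵀ * (M * V) = U * diagonal e * Uᵀ := by
    rw [transpose_mul, ← hspec, hM, Matrix.mul_assoc, Matrix.mul_assoc, Matrix.mul_assoc]
  have henn : ∀ i, 0 ≤ e i := fun i => hpsd.eigenvalues_nonneg i
  have htr : ∀ d : Fin k → ℝ, (U * diagonal d * Uᵀ).trace = ∑ i, d i := by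
    intro d
    rw [trace_mul_cycle, hU1, Matrix.one_mul, trace_diagonal]
  have hsqrt_trace : hpsd.sqrt.trace = ∑ i, Real.sqrt (e i) := by
    rw [Matrix.PosSemidef.sqrt]
    rw [hsUT, RCLike.ofReal_real_eq_id, Function.id_comp, ← hUdef, ← hedef, htr]
    simp [Function.comp]
  -- upper bound
  have hub : ∀ H : Matrix (Fin n) (Fin k) ℝ, ((1 : Matrix (Fin k) (Fin k) ℝ) - Hᵀ * H).PosSemidef →
      ((M * V)ᵀ * H).trace ≤ ∑ i, Real.sqrt (e i) := by
    intro H hH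
    have h1 : (M * V * U)ᵀ * (H * U) = Uᵀ * ((M * V)ᵀ * H) * U := by
      rw [transpose_mul]; simp only [Matrix.mul_assoc]
    have h2 : (Uᵀ * ((M * V)ᵀ * H) * U).trace = ((M * V)ᵀ * H).trace := by
      rw [trace_mul_cycle, ← Matrix.mul_assoc, hU2, Matrix.one_mul]
    have key : ((M * V)ᵀ * H).trace = ∑ i, ∑ j, (M * V * U) j i * (H * U) j i := by
      rw [← h2, ← h1]
      simp [Matrix.trace, Matrix.diag, Matrix.mul_apply, mul_comm, mul_left_comm, mul_assoc]
    rw [key]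
    refine Finset.sum_le_sum fun i _ => ?_
    have hcs := Real.sum_mul_le_sqrt_mul_sqrt Finset.univ
      (fun j => (M * V * U) j i) (fun j => (H * U) j i)
    have hA2 : ∑ j, ((M * V * U) j i) ^ 2 = e i := by
      have hD : (M * V * U)ᵀ * (M * V * U) = diagonal e := by
        rw [transpose_mul, Matrix.mul_assoc, ← Matrix.mul_assoc ((M * V)ᵀ), hAA]
        simp only [Matrix.mul_assoc, hU1', hU1, Matrix.mul_one]
      have hDe : ((M * V * U)ᵀ * (M * V * U)) i i = e i := by rw [hD, diagonal_apply_eq]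
      rw [← hDe]; simp [Matrix.mul_apply, sq, mul_comm, mul_left_comm, mul_assoc]
    have hH2 : ∑ j, ((H * U) j i) ^ 2 ≤ 1 := by
      have hq := hH.conjTranspose_mul_mul_same U
      rw [conjTranspose_eq_transpose_of_trivial] at hq
      have h0 := diag_nonneg'' hq i
      have hexp : Uᵀ * ((1 : Matrix (Fin k) (Fin k) ℝ) - Hᵀ * H) * U
          = 1 - (H * U)ᵀ * (H * U) := by
        rw [Matrix.mul_sub, Matrix.sub_mul, Matrix.mul_one, hU1, transpose_mul]
        simp only [Matrix.mul_assoc]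
      rw [hexp] at h0
      have hdiag : ((H * U)ᵀ * (H * U)) i i = ∑ j, ((H * U) j i) ^ 2 := by
        simp [Matrix.mul_apply, sq, mul_comm, mul_left_comm, mul_assoc]
      simp only [Matrix.sub_apply, Matrix.one_apply_eq, hdiag] at h0
      linarith
    calc ∑ j, (M * V * U) j i * (H * U) j i
        ≤ Real.sqrt (∑ j, ((M * V * U) j i) ^ 2) * Real.sqrt (∑ j, ((H * U) j i) ^ 2) := hcs
      _ ≤ Real.sqrt (e i) * 1 := by
          refine mul_le_mul (le_of_eq (by rw [hA2])) ?_ (Real.sqrt_nonneg _) (Real.sqrt_nonneg _)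
          calc Real.sqrt (∑ j, ((H * U) j i) ^ 2) ≤ Real.sqrt 1 := Real.sqrt_le_sqrt hH2
            _ = 1 := Real.sqrt_one
      _ = Real.sqrt (e i) := mul_one _
  -- the maximizer
  set g : Fin k → ℝ := fun i => (Real.sqrt (e i))⁻¹ with hg
  set H₀ : Matrix (Fin n) (Fin k) ℝ := M * V * (U * diagonal g * Uᵀ) with hH₀
  have hTt : (U * diagonal g * Uᵀ)ᵀ = U * diagonal g * Uᵀ := by
    rw [transpose_mul, transpose_mul, transpose_transpose, diagonal_transpose, Matrix.mul_assoc]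
  have hmul : ∀ d₁ d₂ : Fin k → ℝ, (U * diagonal d₁ * Uᵀ) * (U * diagonal d₂ * Uᵀ)
      = U * diagonal (fun i => d₁ i * d₂ i) * Uᵀ := by
    intro d₁ d₂
    simp only [Matrix.mul_assoc, hU1']
    rw [← Matrix.mul_assoc (diagonal d₁) (diagonal d₂), diagonal_mul_diagonal,
      ← Matrix.mul_assoc]
  have hH₀AA : (M * V)ᵀ * H₀ = U * diagonal (fun i => e i * g i) * Uᵀ := by
    calc (M * V)ᵀ * H₀ = ((M * V)ᵀ * (M * V)) * (U * diagonal g * Uᵀ) := by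
          rw [hH₀]; simp only [Matrix.mul_assoc]
      _ = U * diagonal (fun i => e i * g i) * Uᵀ := by rw [hAA, hmul]
  have hH₀tr : ((M * V)ᵀ * H₀).trace = ∑ i, Real.sqrt (e i) := by
    rw [hH₀AA, htr]
    refine Finset.sum_congr rfl fun i _ => ?_
    rcases eq_or_lt_of_le (henn i) with h | h
    · simp [hg, ← h]
    · have hs : Real.sqrt (e i) ≠ 0 := ne_of_gt (Real.sqrt_pos.mpr h)
      rw [hg]
      field_simp
      rw [Real.sq_sqrt (henn i)]
  have hH₀psd : ((1 : Matrix (Fin k) (Fin k) ℝ) - H₀ᵀ * H₀).PosSemidef := by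
    have hp : H₀ᵀ * H₀ = U * diagonal (fun i => g i * (e i * g i)) * Uᵀ := by
      calc H₀ᵀ * H₀
          = (U * diagonal g * Uᵀ) * ((M * V)ᵀ * (M * V)) * (U * diagonal g * Uᵀ) := by
            rw [hH₀, transpose_mul, hTt]; simp only [Matrix.mul_assoc]
        _ = (U * diagonal g * Uᵀ) * ((U * diagonal e * Uᵀ) * (U * diagonal g * Uᵀ)) := by
            rw [hAA, Matrix.mul_assoc]
        _ = U * diagonal (fun i => g i * (e i * g i)) * Uᵀ := by
            rw [hmul, hmul]
    have hone : (1 : Matrix (Fin k) (Fin k) ℝ)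
        = U * diagonal (fun _ => (1 : ℝ)) * Uᵀ := by
      rw [diagonal_one, Matrix.mul_one, hU2]
    have hsub : (1 : Matrix (Fin k) (Fin k) ℝ) - H₀ᵀ * H₀
        = U * diagonal (fun i => 1 - g i * (e i * g i)) * Uᵀ := by
      rw [hp]
      nth_rewrite 1 [hone]
      rw [← Matrix.sub_mul, ← Matrix.mul_sub, diagonal_sub]
    rw [hsub]
    have hnn : ∀ i, 0 ≤ 1 - g i * (e i * g i) := by
      intro i
      rcases eq_or_lt_of_le (henn i) with h | h
      · simp [hg, ← h]
      · have hs : Real.sqrt (e i) ≠ 0 := ne_of_gt (Real.sqrt_pos.mpr h)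
        have : g i * (e i * g i) = 1 := by
          rw [hg]
          field_simp
          rw [Real.sq_sqrt (henn i)]
        rw [this]; norm_num
    have := (posSemidef_diagonal_iff.mpr hnn).mul_mul_conjTranspose_same U
    rwa [conjTranspose_eq_transpose_of_trivial] at this
  have hmem : hpsd.sqrt.trace ∈ {x : ℝ | ∃ H : Matrix (Fin n) (Fin k) ℝ,
      ((1 : Matrix (Fin k) (Fin k) ℝ) - Hᵀ * H).PosSemidef ∧
      x = ((M * V)ᵀ * H).trace} := ⟨H₀, hH₀psd, by rw [hsqrt_trace, hH₀tr]⟩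
  apply le_antisymm
  · refine csSup_le ⟨_, hmem⟩ ?_
    rintro x ⟨H, hH, rfl⟩
    rw [hsqrt_trace]
    exact hub H hH
  · refine le_csSup ⟨∑ i, Real.sqrt (e i), ?_⟩ hmem
    rintro x ⟨H, hH, rfl⟩
    exact hub H hH
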